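/- For a finite-dimensional Hilbert space with Hamiltonian H, the map β ↦ tr(H ρ_β), where ρ_β = e^{-βH}/tr(e^{-βH}) is the Gibbs state, has derivative -tr((H - E(β))² ρ_β) with E(β) = tr(H ρ_β); in particular this map is monotonically decreasing in β. -/

import Mathlib

open scoped Matrix

variable {n : Type*} [Fintype n] [DecidableEq n]

/-- The Gibbs state (density matrix) at inverse temperature `β` for the
Hamiltonian `H`: `ρ_β = e^{-βH} / tr(e^{-βH})`. -/
noncomputable def gibbsState (H : Matrix n n ℂ) (β : ℝ) : Matrix n n ℂ :=
  ((NormedSpace.exp ((-β : ℂ) • H)).trace)⁻¹ • NormedSpace.exp ((-β : ℂ) • H)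

/-- The expected energy in the Gibbs state: `E(β) = tr(H ρ_β)`. -/
noncomputable def gibbsEnergy (H : Matrix n n ℂ) (β : ℝ) : ℝ :=
  ((H * gibbsState H β).trace).re

section aux

variable (H : Matrix n n ℂ) (hH : H.IsHermitian)

private lemma exp_neg_smul_eq (β : ℝ) :
    NormedSpace.exp ((-β : ℂ) • H) =
      (hH.eigenvectorUnitary : Matrix n n ℂ) *
        Matrix.diagonal (fun i => Complex.exp (-β * hH.eigenvalues i)) *
        star (hH.eigenvectorUnitary : Matrix n n ℂ) := by
  set U : Matrix n n ℂ := (hH.eigenvectorUnitary : Matrix n n ℂ) with hU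
  have hUinv : U⁻¹ = star U := Matrix.inv_eq_left_inv
    (Matrix.mem_unitaryGroup_iff'.mp hH.eigenvectorUnitary.2)
  have hu : IsUnit U := isUnit_iff_exists.mpr
    ⟨star U, Matrix.mem_unitaryGroup_iff.mp hH.eigenvectorUnitary.2,
      Matrix.mem_unitaryGroup_iff'.mp hH.eigenvectorUnitary.2⟩
  set D : Matrix n n ℂ := Matrix.diagonal (RCLike.ofReal ∘ hH.eigenvalues) with hD
  have h1 : (-β : ℂ) • H = U * ((-β : ℂ) • D) * U⁻¹ := by
    rw [hUinv]
    conv_lhs => rw [hH.spectral_theorem, Unitary.conjStarAlgAut_apply]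
    rw [mul_smul_comm, smul_mul_assoc]
  have h2 := Matrix.exp_conj U ((-β : ℂ) • D) hu
  rw [h1, h2, hUinv]
  have h3 : (-β : ℂ) • D = Matrix.diagonal (fun i => (-β : ℂ) * hH.eigenvalues i) := by
    rw [hD, ← Matrix.diagonal_smul]
    congr 1
  rw [h3, Matrix.exp_diagonal]
  have h4 : (NormedSpace.exp fun i : n => (-β : ℂ) * hH.eigenvalues i)
      = fun i : n => Complex.exp ((-β : ℂ) * hH.eigenvalues i) := by
    funext i
    rw [Pi.coe_exp (𝔸 := fun _ : n => ℂ), ← Complex.exp_eq_exp_ℂ]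
  rw [h4]

end aux

/-- The map `β ↦ tr(H ρ_β)` has derivative `-tr((H - E(β))² ρ_β)`; in
particular it is monotonically decreasing in `β`. -/
theorem hasDerivAt_gibbsEnergy [Nonempty n] (H : Matrix n n ℂ) (hH : H.IsHermitian) :
    (∀ β : ℝ,
      HasDerivAt (gibbsEnergy H)
        (-(((H - (gibbsEnergy H β : ℂ) • (1 : Matrix n n ℂ)) ^ 2
            * gibbsState H β).trace).re) β) ∧
      Antitone (gibbsEnergy H) := by
  classical
  set U : Matrix n n ℂ := (hH.eigenvectorUnitary : Matrix n n ℂ) with hU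
  have hsUU : star U * U = 1 := Matrix.mem_unitaryGroup_iff'.mp hH.eigenvectorUnitary.2
  have hUUs : U * star U = 1 := Matrix.mem_unitaryGroup_iff.mp hH.eigenvectorUnitary.2
  set lam : n → ℝ := hH.eigenvalues with hlam
  set cD : (n → ℂ) → Matrix n n ℂ := fun f => U * Matrix.diagonal f * star U with hcD
  -- basic algebra of conjugated diagonals
  have hmul : ∀ f g : n → ℂ, cD f * cD g = cD (f * g) := by
    intro f g
    simp only [hcD, Matrix.mul_assoc]
    rw [← Matrix.mul_assoc (star U) U, hsUU, Matrix.one_mul,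
      ← Matrix.mul_assoc (Matrix.diagonal f), Matrix.diagonal_mul_diagonal]
    rfl
  have htr : ∀ f : n → ℂ, (cD f).trace = ∑ i, f i := by
    intro f
    rw [hcD]
    simp only
    rw [Matrix.trace_mul_cycle, hsUU, Matrix.one_mul, Matrix.trace_diagonal]
  have hHeq : H = cD (fun i => (lam i : ℂ)) := by
    conv_lhs => rw [hH.spectral_theorem]
    rfl
  have hone : ∀ c : ℂ, cD (fun _ => c) = c • 1 := by
    intro c
    have : Matrix.diagonal (fun _ : n => c) = c • (1 : Matrix n n ℂ) := by
      ext i j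
      by_cases h : i = j <;> simp [Matrix.diagonal_apply, Matrix.one_apply, h]
    rw [hcD]
    simp only [this, mul_smul_comm, smul_mul_assoc, Matrix.mul_one, hUUs]
  have hsubD : ∀ f g : n → ℂ, cD f - cD g = cD (f - g) := by
    intro f g
    have hd : Matrix.diagonal (f - g) = Matrix.diagonal f - Matrix.diagonal g := by
      rw [Matrix.diagonal_sub]
      rfl
    rw [hcD]
    simp only [hd, Matrix.mul_sub, Matrix.sub_mul]
  have hexp : ∀ β : ℝ, NormedSpace.exp ((-β : ℂ) • H)
      = cD (fun i => Complex.exp (-β * lam i)) := fun β => exp_neg_smul_eq H hH β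
  -- real-valued partition sums
  set Z : ℝ → ℝ := fun β => ∑ i, Real.exp (-β * lam i) with hZdef
  set S1 : ℝ → ℝ := fun β => ∑ i, lam i * Real.exp (-β * lam i) with hS1def
  set S2 : ℝ → ℝ := fun β => ∑ i, lam i ^ 2 * Real.exp (-β * lam i) with hS2def
  have hZpos : ∀ β, 0 < Z β := fun β =>
    Finset.sum_pos (fun i _ => Real.exp_pos _) Finset.univ_nonempty
  have hZne : ∀ β, Z β ≠ 0 := fun β => (hZpos β).ne'
  have hcexp : ∀ (β : ℝ) (i : n),
      Complex.exp (-β * lam i) = ((Real.exp (-β * lam i) : ℝ) : ℂ) := by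
    intro β i
    rw [Complex.ofReal_exp]
    norm_cast
  have htrexp : ∀ β : ℝ, (NormedSpace.exp ((-β : ℂ) • H)).trace = (Z β : ℂ) := by
    intro β
    rw [hexp, htr]
    simp only [hcexp]
    rw [hZdef]
    exact (Complex.ofReal_sum _ _).symm
  -- Gibbs state in diagonal form
  have hρ : ∀ β : ℝ, gibbsState H β
      = ((Z β : ℂ))⁻¹ • cD (fun i => Complex.exp (-β * lam i)) := by
    intro β
    rw [gibbsState, htrexp, hexp]
  -- energy formula
  have hE : ∀ β : ℝ, gibbsEnergy H β = S1 β / Z β := by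
    intro β
    rw [gibbsEnergy, hρ β, mul_smul_comm, Matrix.trace_smul]
    conv_lhs => rw [hHeq]
    rw [hmul, htr]
    have hsum : ∑ i, ((fun i => (lam i : ℂ)) * fun i => Complex.exp (-β * lam i)) i
        = ((S1 β : ℝ) : ℂ) := by
      simp only [Pi.mul_apply, hcexp]
      rw [hS1def]
      simp only
      rw [Complex.ofReal_sum]
      simp only [Complex.ofReal_mul]
    rw [hsum]
    rw [smul_eq_mul, ← Complex.ofReal_inv, ← Complex.ofReal_mul, Complex.ofReal_re]
    rw [div_eq_inv_mul]
  -- variance formula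
  have hVar : ∀ β : ℝ,
      (((H - (gibbsEnergy H β : ℂ) • (1 : Matrix n n ℂ)) ^ 2 * gibbsState H β).trace).re
        = (∑ i, (lam i - gibbsEnergy H β) ^ 2 * Real.exp (-β * lam i)) / Z β := by
    intro β
    set c : ℝ := gibbsEnergy H β with hc
    have hsub : H - (c : ℂ) • 1 = cD (fun i => (lam i : ℂ) - c) := by
      conv_lhs => rw [hHeq, ← hone (c : ℂ)]
      rw [hsubD]
      rfl
    rw [hsub, sq, hmul, hρ β, mul_smul_comm, hmul, Matrix.trace_smul, htr]
    have hsum : (∑ i, (((fun i => (lam i : ℂ) - c) * fun i => (lam i : ℂ) - c)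
          * fun i => Complex.exp (-β * lam i)) i)
        = ((∑ i, (lam i - c) ^ 2 * Real.exp (-β * lam i) : ℝ) : ℂ) := by
      simp only [Pi.mul_apply, hcexp]
      rw [Complex.ofReal_sum]
      congr 1
      funext i
      push_cast
      ring
    rw [hsum, smul_eq_mul, ← Complex.ofReal_inv, ← Complex.ofReal_mul, Complex.ofReal_re,
      div_eq_inv_mul]
  -- calculus
  have hZ' : ∀ β : ℝ, HasDerivAt Z (-S1 β) β := by
    intro β
    have : -S1 β = ∑ i, -lam i * Real.exp (-β * lam i) := by
      rw [hS1def, ← Finset.sum_neg_distrib]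
      congr 1; funext i; ring
    rw [this]
    apply HasDerivAt.fun_sum
    intro i _
    have h1 : HasDerivAt (fun b : ℝ => -b * lam i) (-lam i) β := by
      simpa using ((hasDerivAt_id β).neg.mul_const (lam i))
    simpa [mul_comm] using h1.exp
  have hS1' : ∀ β : ℝ, HasDerivAt S1 (-S2 β) β := by
    intro β
    have : -S2 β = ∑ i, lam i * (-lam i * Real.exp (-β * lam i)) := by
      rw [hS2def, ← Finset.sum_neg_distrib]
      congr 1; funext i; ring
    rw [this]
    apply HasDerivAt.fun_sum
    intro i _
    have h1 : HasDerivAt (fun b : ℝ => -b * lam i) (-lam i) β := by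
      simpa using ((hasDerivAt_id β).neg.mul_const (lam i))
    have h2 : HasDerivAt (fun b : ℝ => Real.exp (-b * lam i))
        (-lam i * Real.exp (-β * lam i)) β := by
      simpa [mul_comm] using h1.exp
    simpa using h2.const_mul (lam i)
  have hEfun : gibbsEnergy H = fun β => S1 β / Z β := funext hE
  have hderiv : ∀ β : ℝ, HasDerivAt (gibbsEnergy H)
      ((-S2 β * Z β - S1 β * (-S1 β)) / Z β ^ 2) β := by
    intro β
    rw [hEfun]
    exact (hS1' β).div (hZ' β) (hZne β)
  have hval : ∀ β : ℝ,
      -(((H - (gibbsEnergy H β : ℂ) • (1 : Matrix n n ℂ)) ^ 2 * gibbsState H β).trace).re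
        = (-S2 β * Z β - S1 β * (-S1 β)) / Z β ^ 2 := by
    intro β
    rw [hVar β, hE β]
    have h1 : ∑ i, (lam i - S1 β / Z β) ^ 2 * Real.exp (-β * lam i)
        = S2 β - 2 * (S1 β / Z β) * S1 β + (S1 β / Z β) ^ 2 * Z β := by
      set E : ℝ := S1 β / Z β with hEd
      rw [hS2def, hS1def, hZdef]
      simp only
      rw [Finset.mul_sum, Finset.mul_sum, ← Finset.sum_sub_distrib, ← Finset.sum_add_distrib]
      congr 1; funext i; ring
    rw [h1]
    have hz := hZne β
    field_simp
    ring
  constructor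
  · intro β
    rw [hval β]
    exact hderiv β
  · have hd : Differentiable ℝ (gibbsEnergy H) := fun β => (hderiv β).differentiableAt
    apply antitone_of_deriv_nonpos hd
    intro β
    rw [(hderiv β).deriv, ← hval β, neg_nonpos]
    rw [hVar β]
    apply div_nonneg _ (hZpos β).le
    apply Finset.sum_nonneg
    intro i _
    positivity
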